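/- Let S be a set with at least 3 elements and let g : Sⁿ → X be a cyclic operation (g(x₁,...,xₙ) = g(x₂,...,xₙ,x₁) for all inputs), where n ≥ 2. Then g does not preserve inequality: there exist tuples (a₁,...,aₙ), (b₁,...,bₙ) over S with aᵢ ≠ bᵢ for all i and g(ā) = g(b̄). In particular, this can be witnessed by arranging three distinct elements s₁, s₂, s₃ into the arguments according to n mod 3. -/
import Mathlib

private lemma rot_val_aux {m : ℕ} (i : Fin (m + 1)) :
    (finRotate (m + 1) i).val = (i.val + 1) % (m + 1) := by
  rw [finRotate_succ_apply, Fin.add_def, Fin.val_one']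
  show ((i : ℕ) + 1 % (m + 1)) % (m + 1) = _
  rw [Nat.add_mod, Nat.mod_mod, ← Nat.add_mod]

private lemma mod_case {k i N : ℕ} (hk : k ≤ N) (hi : i < N) :
    (i + k) % N = if i + k < N then i + k else i + k - N := by
  split_ifs with h
  · exact Nat.mod_eq_of_lt h
  · rw [Nat.mod_eq_sub_mod (by omega)]
    exact Nat.mod_eq_of_lt (by omega)

/-- A cyclic operation of arity `n ≥ 2` on a set with at least 3 elements does not
preserve inequality: some pair of componentwise-distinct tuples gets equal values. -/
theorem stmt_13 {S X : Type*} (s₁ s₂ s₃ : S) (h12 : s₁ ≠ s₂) (h13 : s₁ ≠ s₃)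
    (h23 : s₂ ≠ s₃) (n : ℕ) (hn : 2 ≤ n) (g : (Fin n → S) → X)
    (hcyc : ∀ x : Fin n → S, g x = g (fun i => x (finRotate n i))) :
    ∃ a b : Fin n → S, (∀ i, a i ≠ b i) ∧ g a = g b := by
  set f : ℕ → S := fun p => if p % 3 = 0 then s₁ else if p % 3 = 1 then s₂ else s₃ with hf
  have hfne : ∀ p q : ℕ, p % 3 ≠ q % 3 → f p ≠ f q := by
    intro p q h
    simp only [hf]
    split_ifs <;>
      first
      | omega
      | exact h12
      | exact h13
      | exact h23
      | exact h12.symm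
      | exact h13.symm
      | exact h23.symm
  obtain ⟨m, rfl⟩ : ∃ m, n = m + 1 := ⟨n - 1, by omega⟩
  by_cases h3 : (m + 1) % 3 = 1
  · -- use shift by 2
    refine ⟨fun i => f i.val, fun i => f ((i.val + 2) % (m + 1)), ?_, ?_⟩
    · intro i
      apply hfne
      have hi := i.isLt
      rw [mod_case (by omega) hi]
      split_ifs <;> omega
    · rw [hcyc, hcyc]
      congr 1
      funext i
      have h1 : (finRotate (m + 1) (finRotate (m + 1) i)).val = (i.val + 2) % (m + 1) := by
        rw [rot_val_aux, rot_val_aux, Nat.add_mod, Nat.mod_mod, ← Nat.add_mod]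
      simp only [h1]
  · -- use shift by 1
    refine ⟨fun i => f i.val, fun i => f ((i.val + 1) % (m + 1)), ?_, ?_⟩
    · intro i
      apply hfne
      have hi := i.isLt
      rw [mod_case (by omega) hi]
      split_ifs <;> omega
    · rw [hcyc]
      congr 1
      funext i
      rw [rot_val_aux]
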